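/- Suppose f is affine on [a,b] (a < b) and U ⊆ ℝ is an open set with λ(U ∩ [a,b]) < b - a and a ∉ U, b ∉ U. Define g on [a,b] by g(x) = f(a) + (λ(([a,b]\U) ∩ [a,x]) / λ([a,b]\U))·(f(b) - f(a)). Then: (i) g is Lipschitz on [a,b]; (ii) g is constant on each open interval (r,s) contained in [a,b] ∩ U; (iii) g(a) = f(a) and g(b) = f(b); (iv) sup_{x ∈ [a,b]} |g(x) - f(x)| ≤ |f(b) - f(a)|. -/

import Mathlib

open Set Filter MeasureTheory Topology
open scoped ENNReal NNReal

/-- `M_f(x,r) = sup { |f(x)-f(y)|/r : |x-y| ≤ r }`, valued in `[0,∞]`. -/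
noncomputable def Mf (f : ℝ → ℝ) (x r : ℝ) : ℝ≥0∞ :=
  ⨆ y ∈ {y : ℝ | |x - y| ≤ r}, ENNReal.ofReal (|f x - f y| / r)

/-- The big Lip function: `Lip f(x) = limsup_{r→0⁺} M_f(x,r)`. -/
noncomputable def bigLip (f : ℝ → ℝ) (x : ℝ) : ℝ≥0∞ :=
  Filter.limsup (fun r => Mf f x r) (𝓝[>] (0 : ℝ))

/-- The little lip function: `lip f(x) = liminf_{r→0⁺} M_f(x,r)`. -/
noncomputable def litLip (f : ℝ → ℝ) (x : ℝ) : ℝ≥0∞ :=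
  Filter.liminf (fun r => Mf f x r) (𝓝[>] (0 : ℝ))

/-- A set `E ⊆ ℝ` is trim if `λ(E ∩ (a,b)) < b - a` for every open interval `(a,b)`. -/
def Trim (E : Set ℝ) : Prop :=
  ∀ a b : ℝ, a < b → volume (E ∩ Ioo a b) < ENNReal.ofReal (b - a)

/-- Lemma on replacing an affine function by one constant on a trim open set. -/
theorem trim_replacement_lemma (f g : ℝ → ℝ) (a b : ℝ) (hab : a < b) (m : ℝ)
    (hf : ∀ x ∈ Icc a b, f x = f a + m * (x - a))
    (U : Set ℝ) (hUopen : IsOpen U)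
    (hUmeas : volume (U ∩ Icc a b) < ENNReal.ofReal (b - a))
    (haU : a ∉ U) (hbU : b ∉ U)
    (hg : ∀ x ∈ Icc a b,
      g x = f a + (volume ((Icc a b \ U) ∩ Icc a x)).toReal /
        (volume (Icc a b \ U)).toReal * (f b - f a)) :
    (∃ K : ℝ≥0, LipschitzOnWith K g (Icc a b)) ∧
    (∀ r s : ℝ, Ioo r s ⊆ Icc a b ∩ U → ∀ x ∈ Ioo r s, ∀ y ∈ Ioo r s, g x = g y) ∧
    (g a = f a ∧ g b = f b) ∧
    (∀ x ∈ Icc a b, |g x - f x| ≤ |f b - f a|) := by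
  have hEm : MeasurableSet (Icc a b \ U) := measurableSet_Icc.diff hUopen.measurableSet
  set E : Set ℝ := Icc a b \ U with hE
  have hvolIcc : volume (Icc a b) = ENNReal.ofReal (b - a) := Real.volume_Icc
  have hEfin : volume E ≠ ⊤ := by
    refine ((measure_mono diff_subset).trans_lt ?_).ne
    rw [hvolIcc]; exact ENNReal.ofReal_lt_top
  have hEpos : 0 < volume E := by
    by_contra h
    push_neg at h
    have h0 : volume E = 0 := le_antisymm h zero_le
    have hle : volume (Icc a b) ≤ volume E + volume (U ∩ Icc a b) := by
      refine (measure_mono ?_).trans (measure_union_le _ _)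
      intro x hx
      by_cases hxU : x ∈ U
      · exact Or.inr ⟨hxU, hx⟩
      · exact Or.inl ⟨hx, hxU⟩
    rw [h0, zero_add, hvolIcc] at hle
    exact absurd hle (not_le.mpr hUmeas)
  set T : ℝ := (volume E).toReal with hT
  have hTpos : 0 < T := ENNReal.toReal_pos hEpos.ne' hEfin
  set μ : ℝ → ℝ := fun x => (volume (E ∩ Icc a x)).toReal with hμ
  have hμfin : ∀ x : ℝ, volume (E ∩ Icc a x) ≠ ⊤ := fun x =>
    ((measure_mono inter_subset_left).trans_lt hEfin.lt_top).ne
  have hμadd : ∀ x y : ℝ, a ≤ x → x ≤ y →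
      μ y = μ x + (volume (E ∩ Ioc x y)).toReal := by
    intro x y hax hxy
    have hsplit : Icc a y = Icc a x ∪ Ioc x y := (Icc_union_Ioc_eq_Icc hax hxy).symm
    have hsets : E ∩ Icc a y = (E ∩ Icc a x) ∪ (E ∩ Ioc x y) := by
      rw [hsplit, inter_union_distrib_left]
    have hdisj : Disjoint (E ∩ Icc a x) (E ∩ Ioc x y) := by
      refine Set.disjoint_left.mpr ?_
      rintro z ⟨-, -, hz2⟩ ⟨-, hz3, -⟩
      exact absurd hz2 (not_le.mpr hz3)
    have hfin2 : volume (E ∩ Ioc x y) ≠ ⊤ :=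
      ((measure_mono inter_subset_left).trans_lt hEfin.lt_top).ne
    simp only [hμ]
    rw [hsets, measure_union hdisj (hEm.inter measurableSet_Ioc),
      ENNReal.toReal_add (hμfin x) hfin2]
  have hμlip : ∀ x ∈ Icc a b, ∀ y ∈ Icc a b, |μ y - μ x| ≤ |y - x| := by
    have key : ∀ x y : ℝ, a ≤ x → x ≤ y → μ y - μ x ≤ y - x ∧ 0 ≤ μ y - μ x := by
      intro x y hax hxy
      rw [hμadd x y hax hxy]
      constructor
      · have : volume (E ∩ Ioc x y) ≤ ENNReal.ofReal (y - x) := by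
          refine (measure_mono inter_subset_right).trans ?_
          rw [Real.volume_Ioc]
        have := ENNReal.toReal_le_of_le_ofReal (by linarith) this
        linarith
      · have := ENNReal.toReal_nonneg (a := volume (E ∩ Ioc x y))
        linarith
    intro x hx y hy
    rcases le_total x y with h | h
    · obtain ⟨h1, h2⟩ := key x y hx.1 h
      rw [abs_of_nonneg h2, abs_of_nonneg (by linarith)]
      exact h1
    · obtain ⟨h1, h2⟩ := key y x hy.1 h
      rw [abs_sub_comm, abs_sub_comm y x, abs_of_nonneg h2, abs_of_nonneg (by linarith)]
      exact h1
  have hgμ : ∀ x ∈ Icc a b, g x = f a + μ x / T * (f b - f a) := hg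
  refine ⟨?_, ?_, ?_, ?_⟩
  · -- Lipschitz
    refine ⟨Real.toNNReal (|f b - f a| / T), ?_⟩
    rw [lipschitzOnWith_iff_dist_le_mul]
    intro x hx y hy
    rw [Real.dist_eq, Real.dist_eq, hgμ x hx, hgμ y hy]
    have : f a + μ x / T * (f b - f a) - (f a + μ y / T * (f b - f a))
        = (μ x - μ y) / T * (f b - f a) := by ring
    rw [this, abs_mul, abs_div, abs_of_pos hTpos]
    have hco : ((Real.toNNReal (|f b - f a| / T) : ℝ≥0) : ℝ) = |f b - f a| / T :=
      Real.coe_toNNReal _ (div_nonneg (abs_nonneg _) hTpos.le)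
    rw [hco]
    have h1 : |μ x - μ y| ≤ |x - y| := hμlip y hy x hx
    calc |μ x - μ y| / T * |f b - f a| ≤ |x - y| / T * |f b - f a| := by
          gcongr
      _ = |f b - f a| / T * |x - y| := by ring
  · -- constant on intervals in U
    intro r s hrs x hx y hy
    have hx' : x ∈ Icc a b := (hrs hx).1
    have hy' : y ∈ Icc a b := (hrs hy).1
    have key : ∀ u v : ℝ, u ∈ Ioo r s → v ∈ Ioo r s → u ≤ v → μ u = μ v := by
      intro u v hu hv huv
      have hau : a ≤ u := ((hrs hu).1).1
      rw [hμadd u v hau huv]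
      have hz : volume (E ∩ Ioc u v) = 0 := by
        have hsub : E ∩ Ioc u v ⊆ ∅ := by
          rintro z ⟨⟨-, hzU⟩, hz1, hz2⟩
          exact hzU ((hrs ⟨lt_of_lt_of_le hu.1 hz1.le, lt_of_le_of_lt hz2 hv.2⟩).2)
        exact le_antisymm ((measure_mono hsub).trans (by simp)) zero_le
      rw [hz]; simp
    have : μ x = μ y := by
      rcases le_total x y with h | h
      · exact key x y hx hy h
      · exact (key y x hy hx h).symm
    rw [hgμ x hx', hgμ y hy', this]
  · -- endpoints
    constructor
    · rw [hgμ a ⟨le_refl a, hab.le⟩]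
      have h0 : volume (E ∩ Icc a a) = 0 := by
        refine le_antisymm ((measure_mono inter_subset_right).trans ?_) zero_le
        simp [Real.volume_Icc]
      simp only [hμ]
      rw [h0]
      simp
    · rw [hgμ b ⟨hab.le, le_refl b⟩]
      have : E ∩ Icc a b = E := inter_eq_left.mpr (fun z hz => hz.1)
      rw [hμ]
      simp only [this]
      rw [← hT, div_self hTpos.ne']
      ring
  · -- sup bound
    intro x hx
    rw [hgμ x hx, hf x hx]
    have hfb : f b - f a = m * (b - a) := by
      rw [hf b ⟨hab.le, le_refl b⟩]; ring
    have hμx0 : 0 ≤ μ x := ENNReal.toReal_nonneg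
    have hμxT : μ x ≤ T := by
      rw [hμ, hT]
      exact ENNReal.toReal_mono hEfin (measure_mono inter_subset_left)
    have hratio : μ x / T ≤ 1 := (div_le_one hTpos).mpr hμxT
    have hratio0 : 0 ≤ μ x / T := div_nonneg hμx0 hTpos.le
    have hxa : 0 ≤ x - a := by linarith [hx.1]
    have hxb : x - a ≤ b - a := by linarith [hx.2]
    have hfrac : (x - a) / (b - a) ≤ 1 := (div_le_one (by linarith)).mpr hxb
    have hfrac0 : 0 ≤ (x - a) / (b - a) := div_nonneg hxa (by linarith)
    have hba : b - a ≠ 0 := by linarith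
    have h2 : (x - a) / (b - a) * (f b - f a) = m * (x - a) := by
      rw [hfb]; field_simp
    have heq : f a + μ x / T * (f b - f a) - (f a + m * (x - a))
        = (μ x / T - (x - a) / (b - a)) * (f b - f a) := by
      rw [sub_mul, h2]; ring
    rw [heq, abs_mul]
    have habs : |μ x / T - (x - a) / (b - a)| ≤ 1 := by
      rw [abs_le]; constructor <;> linarith
    nlinarith [abs_nonneg (f b - f a)]
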